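/- Let n ≥ 1, 1 ≤ s ≤ n−1, and let k be an integer with 0 ≤ k ≤ min(s, n−s). Let Π_S denote the set of permutations π of {1,…,n} with π({1,…,s}) = {1,…,s}. There exists a family (C_π)_{π ∈ Π_S} of sets of permutations of {1,…,n} such that: (1) C_π ∩ C_{π'} = ∅ for all distinct π,π' ∈ Π_S; (2) for each π ∈ Π_S, π ∈ C_π and π is the unique element of C_π that maps {1,…,s} onto {1,…,s}; (3) |C_π| ≥ C(⌊n/2⌋, k), the binomial coefficient; and (4) every ψ ∈ C_π satisfies Swap(π,ψ) ≤ k. -/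

import Mathlib

open Finset

/-- The swap distance between two permutations. -/
noncomputable def swapDist {n : ℕ} (π π' : Equiv.Perm (Fin n)) : ℕ :=
  sInf {t | ∃ l : List (Equiv.Perm (Fin n)),
    (∀ τ ∈ l, τ.IsSwap) ∧ l.length = t ∧ π' = π * l.prod}

/-- The set `{1, …, s}`, realized as the first `s` elements of `Fin n`. -/
def lowSet (n s : ℕ) : Finset (Fin n) := Finset.univ.filter (fun i => (i : ℕ) < s)

/-- `π` maps `{1, …, s}` onto `{1, …, s}`. -/
def PreservesLow {n : ℕ} (s : ℕ) (π : Equiv.Perm (Fin n)) : Prop :=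
  (lowSet n s).image ⇑π = lowSet n s

lemma swap_list_image {n : ℕ} : ∀ (k : ℕ) (X Y : Finset (Fin n)), X.card = k →
    Disjoint X Y → Y.card = k →
    ∃ l : List (Equiv.Perm (Fin n)), (∀ τ ∈ l, τ.IsSwap) ∧ l.length = k ∧
      ∀ U : Finset (Fin n), X ⊆ U → Disjoint Y U → U.image ⇑(l.prod) = (U \ X) ∪ Y := by
  intro k
  induction k with
  | zero =>
    intro X Y hX _ hY
    refine ⟨[], by simp, rfl, ?_⟩
    rw [Finset.card_eq_zero] at hX hY
    subst hX; subst hY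
    intro U _ _
    simp
  | succ k ih =>
    intro X Y hX hdisj hY
    obtain ⟨x, hx⟩ := Finset.card_pos.mp (by omega : 0 < X.card)
    obtain ⟨y, hy⟩ := Finset.card_pos.mp (by omega : 0 < Y.card)
    obtain ⟨l, hl1, hl2, hl3⟩ := ih (X.erase x) (Y.erase y)
      (by rw [Finset.card_erase_of_mem hx, hX]; omega)
      (Finset.disjoint_of_subset_left (Finset.erase_subset _ _)
        (Finset.disjoint_of_subset_right (Finset.erase_subset _ _) hdisj))
      (by rw [Finset.card_erase_of_mem hy, hY]; omega)
    have hxy : x ≠ y := fun h => Finset.disjoint_left.mp hdisj hx (h ▸ hy)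
    have hyX : y ∉ X := fun h => Finset.disjoint_left.mp hdisj h hy
    have hxY : x ∉ Y := fun h => Finset.disjoint_left.mp hdisj hx h
    refine ⟨l ++ [Equiv.swap x y], ?_, by simp [hl2], ?_⟩
    · intro τ hτ
      rcases List.mem_append.mp hτ with h | h
      · exact hl1 τ h
      · simp at h; subst h; exact ⟨x, y, hxy, rfl⟩
    · intro U hXU hYU
      have hxU : x ∈ U := hXU hx
      have hyU : y ∉ U := Finset.disjoint_left.mp hYU hy
      have hswap : U.image ⇑(Equiv.swap x y) = insert y (U.erase x) := by
        ext z
        simp only [Finset.mem_image, Finset.mem_insert, Finset.mem_erase]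
        constructor
        · rintro ⟨a, ha, rfl⟩
          rcases eq_or_ne a x with rfl | hax
          · left; rw [Equiv.swap_apply_left]
          · rcases eq_or_ne a y with hay | hay
            · exact absurd (hay ▸ ha) hyU
            · right; rw [Equiv.swap_apply_of_ne_of_ne hax hay]; exact ⟨hax, ha⟩
        · rintro (hzy | ⟨hzx, hzU⟩)
          · exact ⟨x, hxU, by rw [Equiv.swap_apply_left, hzy]⟩
          · rcases eq_or_ne z y with hzy | hzy
            · exact ⟨x, hxU, by rw [Equiv.swap_apply_left, hzy]⟩
            · exact ⟨z, hzU, Equiv.swap_apply_of_ne_of_ne hzx hzy⟩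
      have hprod : (l ++ [Equiv.swap x y]).prod = l.prod * Equiv.swap x y := by simp
      rw [hprod]
      have himg : U.image ⇑(l.prod * Equiv.swap x y)
          = (U.image ⇑(Equiv.swap x y)).image ⇑(l.prod) := by
        rw [Finset.image_image]; rfl
      rw [himg, hswap, hl3 (insert y (U.erase x))
        (by
          intro z hz
          have hzx : z ≠ x := Finset.ne_of_mem_erase hz
          exact Finset.mem_insert_of_mem (Finset.mem_erase.mpr ⟨hzx, hXU (Finset.mem_of_mem_erase hz)⟩))
        (by
          rw [Finset.disjoint_insert_right]
          exact ⟨fun h => (Finset.notMem_erase y Y) h,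
            Finset.disjoint_of_subset_right (Finset.erase_subset _ _)
              (Finset.disjoint_of_subset_left (Finset.erase_subset _ _) hYU)⟩)]
      ext z
      rcases eq_or_ne z x with rfl | hzx
      · simp [hx, hxU, hxY, hxy]
      · rcases eq_or_ne z y with rfl | hzy
        · simp [hy, hyU, hyX]
        · simp [Finset.mem_erase, hzx, hzy]

lemma conj_list_prod {G : Type*} [Group G] (g : G) (l : List G) :
    (l.map (fun x => g⁻¹ * x * g)).prod = g⁻¹ * l.prod * g := by
  induction l with
  | nil => simp
  | cons a t ih => rw [List.map_cons, List.prod_cons, List.prod_cons, ih]; group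

theorem exists_disjoint_family_half {n : ℕ} (hn : 1 ≤ n) (s : ℕ) (hs1 : 1 ≤ s)
    (hs2 : s ≤ n - 1) (k : ℕ) (hk : k ≤ min s (n - s)) :
    ∃ C : Equiv.Perm (Fin n) → Finset (Equiv.Perm (Fin n)),
      (∀ π π', PreservesLow s π → PreservesLow s π' → π ≠ π' → Disjoint (C π) (C π')) ∧
      (∀ π, PreservesLow s π → π ∈ C π ∧ ∀ ψ ∈ C π, PreservesLow s ψ → ψ = π) ∧
      (∀ π, PreservesLow s π → (n / 2).choose k ≤ (C π).card) ∧
      (∀ π, PreservesLow s π → ∀ ψ ∈ C π, swapDist π ψ ≤ k) := by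
  classical
  have hsn : s ≤ n := by omega
  have hks : k ≤ s := le_trans hk (min_le_left _ _)
  have hkns : k ≤ n - s := le_trans hk (min_le_right _ _)
  have hlowcard : (lowSet n s).card = s := by
    have himg : (lowSet n s).image Fin.val = Finset.range s := by
      ext a
      simp only [lowSet, Finset.mem_image, Finset.mem_filter, Finset.mem_univ, true_and,
        Finset.mem_range]
      constructor
      · rintro ⟨i, hi, rfl⟩; exact hi
      · intro ha; exact ⟨⟨a, by omega⟩, ha, rfl⟩
    have h2 := Finset.card_image_of_injective (lowSet n s) (Fin.val_injective)
    rw [himg, Finset.card_range] at h2; exact h2.symm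
  have hhighcard : ((lowSet n s)ᶜ : Finset (Fin n)).card = n - s := by
    rw [Finset.card_compl, hlowcard, Fintype.card_fin]
  have hdisjlow : ∀ Y : Finset (Fin n), Y ⊆ (lowSet n s)ᶜ → Disjoint Y (lowSet n s) :=
    fun Y hY => Finset.disjoint_left.mpr (fun z hz => Finset.mem_compl.mp (hY hz))
  -- splitting lemma
  have hsplit : ∀ X Y : Finset (Fin n), X ⊆ lowSet n s → Y ⊆ (lowSet n s)ᶜ →
      lowSet n s \ ((lowSet n s \ X) ∪ Y) = X ∧ ((lowSet n s \ X) ∪ Y) \ lowSet n s = Y := by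
    intro X Y hX hY
    have h1 : ∀ z : Fin n, z ∈ X → z ∈ lowSet n s := fun z h => hX h
    have h2 : ∀ z : Fin n, z ∈ Y → z ∉ lowSet n s := fun z h => Finset.mem_compl.mp (hY h)
    constructor
    · ext z
      have := h1 z; have := h2 z
      simp only [Finset.mem_sdiff, Finset.mem_union, not_or, not_and, not_not]
      tauto
    · ext z
      have := h1 z; have := h2 z
      simp only [Finset.mem_sdiff, Finset.mem_union]
      tauto
  -- choose swap lists
  have hexl : ∀ X Y : Finset (Fin n), ∃ l : List (Equiv.Perm (Fin n)),
      X.card = k → Y.card = k → Disjoint X Y →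
      (∀ τ ∈ l, τ.IsSwap) ∧ l.length = k ∧
        ∀ U, X ⊆ U → Disjoint Y U → U.image ⇑l.prod = (U \ X) ∪ Y := by
    intro X Y
    by_cases h : X.card = k ∧ Y.card = k ∧ Disjoint X Y
    · obtain ⟨l, h1, h2, h3⟩ := swap_list_image k X Y h.1 h.2.2 h.2.1
      exact ⟨l, fun _ _ _ => ⟨h1, h2, h3⟩⟩
    · exact ⟨[], fun h1 h2 h3 => absurd ⟨h1, h2, h3⟩ h⟩
  choose L hL using hexl
  set pairs : Finset (Finset (Fin n) × Finset (Fin n)) :=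
    ((lowSet n s).powersetCard k) ×ˢ (((lowSet n s)ᶜ : Finset (Fin n)).powersetCard k)
    with hpairs
  have hpm : ∀ p ∈ pairs, p.1 ⊆ lowSet n s ∧ p.1.card = k ∧ p.2 ⊆ (lowSet n s)ᶜ ∧ p.2.card = k := by
    intro p hp
    rw [hpairs, Finset.mem_product] at hp
    obtain ⟨h1, h2⟩ := hp
    rw [Finset.mem_powersetCard] at h1 h2
    exact ⟨h1.1, h1.2, h2.1, h2.2⟩
  set f : Finset (Fin n) × Finset (Fin n) → Equiv.Perm (Fin n) := fun p => (L p.1 p.2).prod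
    with hf
  have hLspec : ∀ p ∈ pairs, (∀ τ ∈ L p.1 p.2, τ.IsSwap) ∧ (L p.1 p.2).length = k ∧
      (lowSet n s).image ⇑(f p) = (lowSet n s \ p.1) ∪ p.2 := by
    intro p hp
    obtain ⟨h1, h2, h3, h4⟩ := hpm p hp
    have hd : Disjoint p.1 p.2 :=
      Finset.disjoint_left.mpr fun z hz1 hz2 => Finset.mem_compl.mp (h3 hz2) (h1 hz1)
    obtain ⟨g1, g2, g3⟩ := hL p.1 p.2 h2 h4 hd
    exact ⟨g1, g2, g3 (lowSet n s) h1 (hdisjlow _ h3)⟩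
  -- image of lowSet under f p * π
  have himg : ∀ π : Equiv.Perm (Fin n), PreservesLow s π → ∀ p ∈ pairs,
      (lowSet n s).image ⇑(f p * π) = (lowSet n s \ p.1) ∪ p.2 := by
    intro π hπ p hp
    have h0 : (lowSet n s).image ⇑π = lowSet n s := hπ
    have h1 : (lowSet n s).image ⇑(f p * π) = ((lowSet n s).image ⇑π).image ⇑(f p) := by
      rw [Finset.image_image]; rfl
    rw [h1, h0]
    exact (hLspec p hp).2.2
  have huniq : ∀ p ∈ pairs, ∀ q ∈ pairs,
      (lowSet n s \ p.1) ∪ p.2 = (lowSet n s \ q.1) ∪ q.2 → p = q := by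
    intro p hp q hq h
    obtain ⟨hp1, _, hp3, _⟩ := hpm p hp
    obtain ⟨hq1, _, hq3, _⟩ := hpm q hq
    have e1 := (hsplit p.1 p.2 hp1 hp3).1
    have e2 := (hsplit q.1 q.2 hq1 hq3).1
    have e3 := (hsplit p.1 p.2 hp1 hp3).2
    have e4 := (hsplit q.1 q.2 hq1 hq3).2
    have hh1 : p.1 = q.1 := by rw [← e1, ← e2, h]
    have hh2 : p.2 = q.2 := by rw [← e3, ← e4, h]
    exact Prod.ext hh1 hh2
  -- if the image is lowSet itself then f p = 1
  have htriv : ∀ p ∈ pairs, (lowSet n s \ p.1) ∪ p.2 = lowSet n s → f p = 1 := by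
    intro p hp h
    obtain ⟨hp1, hp2, hp3, hp4⟩ := hpm p hp
    have hY : p.2 = ∅ := by
      rw [← (hsplit p.1 p.2 hp1 hp3).2, h]; simp
    have hk0 : k = 0 := by rw [← hp4, hY]; simp
    have hlen := (hLspec p hp).2.1
    have hnil : L p.1 p.2 = [] := List.length_eq_zero_iff.mp (by rw [hlen, hk0])
    rw [hf]; simp [hnil]
  refine ⟨fun π => insert π (pairs.image (fun p => f p * π)), ?_, ?_, ?_, ?_⟩
  · -- disjointness
    intro π π' hπ hπ' hne
    rw [Finset.disjoint_left]
    intro ψ hψ hψ'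
    rw [Finset.mem_insert] at hψ hψ'
    rcases hψ with rfl | hψ
    · rcases hψ' with h | h
      · exact hne h
      · obtain ⟨p, hp, hpe⟩ := Finset.mem_image.mp h
        have him : (lowSet n s).image ⇑ψ = (lowSet n s \ p.1) ∪ p.2 := by
          rw [← hpe]; exact himg π' hπ' p hp
        have him2 : (lowSet n s).image ⇑ψ = lowSet n s := hπ
        have h1 := htriv p hp (by rw [← him, him2])
        exact hne (by rw [← hpe, h1, one_mul])
    · rcases hψ' with rfl | hψ'
      · obtain ⟨p, hp, hpe⟩ := Finset.mem_image.mp hψ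
        have him : (lowSet n s).image ⇑ψ = (lowSet n s \ p.1) ∪ p.2 := by
          rw [← hpe]; exact himg π hπ p hp
        have him2 : (lowSet n s).image ⇑ψ = lowSet n s := hπ'
        have h1 := htriv p hp (by rw [← him, him2])
        exact hne (by rw [← hpe, h1, one_mul])
      · obtain ⟨p, hp, hpe⟩ := Finset.mem_image.mp hψ
        obtain ⟨q, hq, hqe⟩ := Finset.mem_image.mp hψ'
        have him : (lowSet n s \ p.1) ∪ p.2 = (lowSet n s \ q.1) ∪ q.2 := by
          rw [← himg π hπ p hp, ← himg π' hπ' q hq]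
          rw [hpe, hqe]
        have hpq : p = q := huniq p hp q hq him
        subst hpq
        have heq : f p * π = f p * π' := by rw [hpe, hqe]
        exact hne (mul_left_cancel heq)
  · -- membership and uniqueness
    intro π hπ
    refine ⟨Finset.mem_insert_self _ _, ?_⟩
    intro ψ hψ hψlow
    rw [Finset.mem_insert] at hψ
    rcases hψ with rfl | hψ
    · rfl
    · obtain ⟨p, hp, hpe⟩ := Finset.mem_image.mp hψ
      have him : (lowSet n s).image ⇑ψ = (lowSet n s \ p.1) ∪ p.2 := by
        rw [← hpe]; exact himg π hπ p hp
      have him2 : (lowSet n s).image ⇑ψ = lowSet n s := hψlow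
      have h1 := htriv p hp (by rw [← him, him2])
      rw [← hpe, h1, one_mul]
  · -- cardinality
    intro π hπ
    have hinj : Set.InjOn (fun p => f p * π) pairs := by
      intro p hp q hq h
      have h2 : f p = f q := mul_right_cancel h
      apply huniq p hp q hq
      rw [← (hLspec p hp).2.2, ← (hLspec q hq).2.2, h2]
    have hcard : (pairs.image (fun p => f p * π)).card = pairs.card :=
      Finset.card_image_of_injOn hinj
    have hpc : pairs.card = s.choose k * (n - s).choose k := by
      rw [hpairs, Finset.card_product, Finset.card_powersetCard, Finset.card_powersetCard,
        hlowcard, hhighcard]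
    have harith : (n / 2).choose k ≤ s.choose k * (n - s).choose k := by
      rcases le_total s (n - s) with h | h
      · have h2 : n / 2 ≤ n - s := by omega
        calc (n / 2).choose k ≤ (n - s).choose k := Nat.choose_le_choose k h2
          _ ≤ s.choose k * (n - s).choose k :=
            Nat.le_mul_of_pos_left _ (Nat.choose_pos hks)
      · have h2 : n / 2 ≤ s := by omega
        calc (n / 2).choose k ≤ s.choose k := Nat.choose_le_choose k h2
          _ ≤ s.choose k * (n - s).choose k :=
            Nat.le_mul_of_pos_right _ (Nat.choose_pos hkns)
    calc (n / 2).choose k ≤ pairs.card := by rw [hpc]; exact harith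
      _ = (pairs.image (fun p => f p * π)).card := hcard.symm
      _ ≤ (insert π (pairs.image (fun p => f p * π))).card :=
        Finset.card_le_card (Finset.subset_insert _ _)
  · -- swap distance
    intro π hπ ψ hψ
    rw [Finset.mem_insert] at hψ
    rcases hψ with rfl | hψ
    · have h0 : (0 : ℕ) ∈ {t | ∃ l : List (Equiv.Perm (Fin n)),
          (∀ τ ∈ l, τ.IsSwap) ∧ l.length = t ∧ ψ = ψ * l.prod} :=
        ⟨[], fun τ h => absurd h List.not_mem_nil, rfl, by simp⟩
      exact le_trans (Nat.sInf_le h0) (Nat.zero_le k)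
    · obtain ⟨p, hp, hpe⟩ := Finset.mem_image.mp hψ
      obtain ⟨hsw, hlen, _⟩ := hLspec p hp
      set l' : List (Equiv.Perm (Fin n)) := (L p.1 p.2).map (fun τ => π⁻¹ * τ * π) with hl'
      have hmem : k ∈ {t | ∃ l : List (Equiv.Perm (Fin n)),
          (∀ τ ∈ l, τ.IsSwap) ∧ l.length = t ∧ ψ = π * l.prod} := by
        refine ⟨l', ?_, ?_, ?_⟩
        · intro τ hτ
          rw [hl', List.mem_map] at hτ
          obtain ⟨σ, hσ, rfl⟩ := hτ
          obtain ⟨a, b, hab, rfl⟩ := hsw σ hσ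
          refine ⟨π⁻¹ a, π⁻¹ b, fun h => hab (π⁻¹.injective h), ?_⟩
          have := Equiv.swap_apply_apply π⁻¹ a b
          rw [inv_inv] at this
          exact this.symm
        · rw [hl', List.length_map, hlen]
        · rw [hl', conj_list_prod, ← hpe]
          show f p * π = π * (π⁻¹ * (L p.1 p.2).prod * π)
          rw [hf]
          group
      exact Nat.sInf_le hmem
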